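/- Let K be a full subquiver of the Hasse diagram C^n of ({0,1}^n, ≤) satisfying: (i) (0,...,0),(1,...,1) ∈ K₀; (ii) for any T > T' in K₀ there is a path from T to T' in K; (iii) K₀ is closed under coordinatewise min and max. If K decomposes as K = K(1) ⃗⨿ K(2) with minimal element T of K(1) and maximal element T' of K(2), then T is the componentwise characteristic vector T(i) for some coordinate i with T_i = 0, T'_i = 1, and every element of K₀ is comparable to T. -/
import Mathlib


/-- Let `K` be (the vertex set of) a full subquiver of the
Hasse diagram `C^n` of the Boolean lattice `({0,1}^n, ≤)` satisfying:
(i) the bottom `(0,…,0)` and top `(1,…,1)` belong to `K`;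
(ii) any order relation between elements of `K` is witnessed by a directed
path inside `K` (single-coordinate steps);
(iii) `K` is closed under coordinatewise `min` and `max`.
Suppose `K` decomposes as `K = K(1) ⃗⨿ K(2)` (a partition in which every
element of `K(1)` lies below every element of `K(2)` in the coordinatewise
order, i.e. above it in the tilting order), with `T` the minimal element of
`K(1)` in the tilting order (the coordinatewise-largest element of `K(1)`) and
`T'` the maximal element of `K(2)` in the tilting order (the
coordinatewise-smallest element of `K(2)`).  Then there is a coordinate `i`
with `T_i = 0` and `T'_i = 1` such that `T` is the componentwise characteristic
vector `T(i)` (the largest element of `K` whose `i`-th coordinate vanishes),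
and every element of `K` is comparable to `T`. -/
theorem decomposition_characteristic_vector {n : ℕ}
    (K K1 K2 : Set (Fin n → Bool))
    (hbot : (fun _ => false) ∈ K) (htop : (fun _ => true) ∈ K)
    (hpath : ∀ T ∈ K, ∀ T' ∈ K, T ≤ T' →
      Relation.ReflTransGen
        (fun a b => a ∈ K ∧ b ∈ K ∧ a ≤ b ∧ ∃! i : Fin n, a i ≠ b i) T T')
    (hclosed : ∀ T ∈ K, ∀ T' ∈ K,
      (fun i => T i && T' i) ∈ K ∧ (fun i => T i || T' i) ∈ K)
    (hunion : K = K1 ∪ K2) (hdisj : Disjoint K1 K2)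
    (hK1 : K1.Nonempty) (hK2 : K2.Nonempty)
    (hdom : ∀ S1 ∈ K1, ∀ S2 ∈ K2, S1 ≤ S2)
    (T : Fin n → Bool) (hT : T ∈ K1 ∧ ∀ S ∈ K1, S ≤ T)
    (T' : Fin n → Bool) (hT' : T' ∈ K2 ∧ ∀ S ∈ K2, T' ≤ S) :
    ∃ i : Fin n, T i = false ∧ T' i = true ∧
      (∀ S ∈ K, S i = false → S ≤ T) ∧ (∀ S ∈ K, S ≤ T ∨ T ≤ S) := by
  obtain ⟨hT1, hTmax⟩ := hT
  obtain ⟨hT'2, hT'min⟩ := hT'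
  have hTK : T ∈ K := hunion ▸ Or.inl hT1
  have hT'K : T' ∈ K := hunion ▸ Or.inr hT'2
  have hle : T ≤ T' := hdom T hT1 T' hT'2
  have hne : T ≠ T' := fun h => hdisj.ne_of_mem hT1 hT'2 h
  have hp := hpath T hTK T' hT'K hle
  rcases hp.cases_head with h | ⟨a, ⟨_, haK, hTa, i0, hi, hiuniq⟩, _⟩
  · exact absurd h hne
  have ha2 : a ∈ K2 := by
    rcases hunion ▸ haK with h1 | h2
    · exact absurd (le_antisymm hTa (hTmax a h1)) (fun h => hi (congrFun h i0))
    · exact h2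
  have hT'a : T' ≤ a := hT'min a ha2
  have hTi : T i0 = false := by
    have := hTa i0; revert hi this; cases T i0 <;> cases a i0 <;> simp
  have hai : a i0 = true := by
    have := hTa i0; revert hi this; cases T i0 <;> cases a i0 <;> simp
  have hT'i : T' i0 = true := by
    by_contra h
    apply hdisj.ne_of_mem hT1 hT'2
    funext j
    by_cases hj : j = i0
    · subst hj
      rw [hTi]
      cases h' : T' j
      · rfl
      · exact absurd h' h
    · have heq : T j = a j := by
        by_contra hne'
        exact hj (hiuniq j hne')
      exact le_antisymm (hle j) (by rw [heq]; exact hT'a j)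
  refine ⟨i0, hTi, hT'i, ?_, ?_⟩
  · intro S hS hSi
    rcases hunion ▸ hS with h1 | h2
    · exact hTmax S h1
    · exact absurd (hT'min S h2 i0) (by simp [hSi, hT'i])
  · intro S hS
    rcases hunion ▸ hS with h1 | h2
    · exact Or.inl (hTmax S h1)
    · exact Or.inr (hle.trans (hT'min S h2))
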